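/- Let p > 1, C > 0, d = (p−1)/(2(p+1)) · C^{−2(p+1)/(p−1)}, and 0 ≤ J₀ < d. Suppose ε₃ > 1 satisfies J₀ = (ε₁² ε₃² / C²)(1/2 − ε₃^{p−1}/(p+1)), where ε₁ = C^{−2/(p−1)}. Then ε₃ ≥ ((p+1)/2 − C^{2(p+1)/(p−1)} J₀ (p+1))^{1/(p−1)} > 1. -/

import Mathlib

theorem stmt_3 (p C J₀ ε₃ : ℝ) (hp : 1 < p) (hC : 0 < C)
    (d : ℝ) (hd : d = (p - 1) / (2 * (p + 1)) * C ^ (-(2 * (p + 1)) / (p - 1)))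
    (hJ₀ : 0 ≤ J₀) (hJ₀d : J₀ < d)
    (ε₁ : ℝ) (hε₁ : ε₁ = C ^ (-2 / (p - 1)))
    (hε₃ : 1 < ε₃)
    (heq : J₀ = ε₁ ^ 2 * ε₃ ^ 2 / C ^ 2 * (1 / 2 - ε₃ ^ (p - 1) / (p + 1))) :
    ε₃ ≥ ((p + 1) / 2 - C ^ (2 * (p + 1) / (p - 1)) * J₀ * (p + 1)) ^ (1 / (p - 1)) ∧
      ((p + 1) / 2 - C ^ (2 * (p + 1) / (p - 1)) * J₀ * (p + 1)) ^ (1 / (p - 1)) > 1 := by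
  have hp1 : (0:ℝ) < p - 1 := by linarith
  have hp2 : (0:ℝ) < p + 1 := by linarith
  have hε₃0 : (0:ℝ) < ε₃ := by linarith
  set A : ℝ := C ^ (2 * (p + 1) / (p - 1)) with hAdef
  have hA : 0 < A := Real.rpow_pos_of_pos hC _
  -- ε₁^2 / C^2 = A⁻¹
  have he1 : ε₁ ^ 2 / C ^ 2 = A⁻¹ := by
    rw [hε₁, ← Real.rpow_natCast (C ^ (-2 / (p - 1))) 2, ← Real.rpow_mul hC.le,
      ← Real.rpow_natCast C 2, ← Real.rpow_sub hC, hAdef,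
      ← Real.rpow_neg_one (C ^ (2 * (p + 1) / (p - 1))), ← Real.rpow_mul hC.le]
    congr 1
    push_cast
    field_simp
    ring
  have hAinv : A * A⁻¹ = 1 := mul_inv_cancel₀ hA.ne'
  set a : ℝ := ε₃ ^ (p - 1) with hadef
  have ha0 : 0 < a := Real.rpow_pos_of_pos hε₃0 _
  have heq' : J₀ = A⁻¹ * ε₃ ^ 2 * (1 / 2 - a / (p + 1)) := by
    rw [heq, ← he1]; ring
  -- factor nonneg, hence a ≤ (p+1)/2
  have hfac : 0 ≤ 1 / 2 - a / (p + 1) := by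
    by_contra h
    push_neg at h
    have hpos : 0 < A⁻¹ * ε₃ ^ 2 := by positivity
    nlinarith [mul_pos hpos (neg_pos.mpr h)]
  have hale : a ≤ (p + 1) / 2 := by
    rw [sub_nonneg, div_le_iff₀ hp2] at hfac
    linarith
  have hAJ : A * J₀ = ε₃ ^ 2 * (1 / 2 - a / (p + 1)) := by
    rw [heq']
    calc A * (A⁻¹ * ε₃ ^ 2 * (1 / 2 - a / (p + 1)))
        = (A * A⁻¹) * (ε₃ ^ 2 * (1 / 2 - a / (p + 1))) := by ring
      _ = ε₃ ^ 2 * (1 / 2 - a / (p + 1)) := by rw [hAinv, one_mul]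
  set B : ℝ := (p + 1) / 2 - A * J₀ * (p + 1) with hBdef
  -- B > 1
  have hAd : A * d = (p - 1) / (2 * (p + 1)) := by
    rw [hd, hAdef, mul_comm, mul_assoc, ← Real.rpow_add hC]
    have : -(2 * (p + 1)) / (p - 1) + 2 * (p + 1) / (p - 1) = 0 := by
      field_simp
      ring
    rw [this, Real.rpow_zero, mul_one]
  have hB1 : 1 < B := by
    have h1 : A * J₀ < A * d := by
      exact (mul_lt_mul_iff_right₀ hA).mpr hJ₀d
    rw [hAd] at h1
    have h2 : A * J₀ * (p + 1) < (p - 1) / 2 := by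
      calc A * J₀ * (p + 1) < (p - 1) / (2 * (p + 1)) * (p + 1) := by
            exact (mul_lt_mul_iff_left₀ hp2).mpr h1
        _ = (p - 1) / 2 := by field_simp
    rw [hBdef]
    linarith
  have hB0 : 0 < B := lt_trans one_pos hB1
  -- B ≤ a
  have hBa : B ≤ a := by
    have h3 : A * J₀ * (p + 1) = ε₃ ^ 2 * ((p + 1) / 2 - a) := by
      rw [hAJ]
      field_simp
    have h4 : 1 ≤ ε₃ ^ 2 := by nlinarith
    have h5 : B = (p + 1) / 2 - ε₃ ^ 2 * ((p + 1) / 2 - a) := by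
      rw [hBdef, h3]
    clear_value B a A
    nlinarith [mul_nonneg (sub_nonneg.mpr h4) (sub_nonneg.mpr hale), h5]
  have hmain : B ^ (1 / (p - 1)) ≤ ε₃ := by
    calc B ^ (1 / (p - 1)) ≤ a ^ (1 / (p - 1)) :=
          Real.rpow_le_rpow hB0.le hBa (by positivity)
      _ = ε₃ := by
          rw [hadef, ← Real.rpow_mul hε₃0.le, mul_one_div, div_self hp1.ne',
            Real.rpow_one]
  refine ⟨hmain, ?_⟩
  exact (Real.one_lt_rpow_iff_of_pos hB0).mpr (Or.inl ⟨hB1, by positivity⟩)
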